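/- QCMI of multi-qubit W states: Let n ≥ 4 and let Ψ_n = |W_n⟩⟨W_n| be the n-qubit W state with |W_n⟩ = n^{−1/2} Σ_{i=1}^{n} |e_i⟩, where |e_i⟩ denotes the computational basis state with a 1 in position i and 0 elsewhere. Take A, B, C to be the first, second, and third qubits respectively and D the remaining n−3 qubits. Then I(A;C|B)_{Ψ_n} = 2·h₂(2/n) − h₂(1/n) − h₂(3/n). In particular I(A;C|B)_{Ψ_n} > 0 for every finite n ≥ 4. -/

import Mathlib

open scoped ComplexOrder

/-- A density operator (quantum state): positive semidefinite with unit trace. -/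
def IsDensity {d : Type*} [Fintype d] (ρ : Matrix d d ℂ) : Prop :=
  ρ.PosSemidef ∧ ρ.trace = 1

/-- Von Neumann entropy `S(ρ) = −tr(ρ log₂ ρ)`, computed via eigenvalues
(with the convention `0 · log₂ 0 = 0`); junk value `0` on non-Hermitian input. -/
noncomputable def vnEntropy {d : Type*} [Fintype d] [DecidableEq d]
    (ρ : Matrix d d ℂ) : ℝ := by
  classical exact
    if h : ρ.IsHermitian then -∑ i, (h.eigenvalues i) * Real.logb 2 (h.eigenvalues i) else 0

/-- Quantum conditional mutual information `I(x;z|y)_ρ = S(xy) + S(yz) − S(y) − S(xyz)`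
for a state on `x ⊗ y ⊗ z` (conditioning on the middle system `y`). -/
noncomputable def qcmi {x y z : Type*} [Fintype x] [Fintype y] [Fintype z]
    [DecidableEq x] [DecidableEq y] [DecidableEq z]
    (ρ : Matrix (x × y × z) (x × y × z) ℂ) : ℝ :=
  vnEntropy (Matrix.of fun (p q : x × y) => ∑ c, ρ (p.1, p.2, c) (q.1, q.2, c))
  + vnEntropy (Matrix.of fun (p q : y × z) => ∑ a, ρ (a, p.1, p.2) (a, q.1, q.2))
  - vnEntropy (Matrix.of fun (b b' : y) => ∑ a, ∑ c, ρ (a, b, c) (a, b', c))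
  - vnEntropy ρ

/-- For a state `σ` on `A ⊗ B ⊗ C ⊗ D ⊗ E`, the conditional mutual information
`I(A;C|BE)_σ`: the spectator `D` is traced out and `BE` is the conditioning system. -/
noncomputable def qcmiACgivenBE {dA dB dC dD dE : Type*}
    [Fintype dA] [Fintype dB] [Fintype dC] [Fintype dD] [Fintype dE]
    [DecidableEq dA] [DecidableEq dB] [DecidableEq dC] [DecidableEq dE]
    (σ : Matrix ((dA × dB × dC × dD) × dE) ((dA × dB × dC × dD) × dE) ℂ) : ℝ :=
  qcmi (Matrix.of fun (p q : dA × (dB × dE) × dC) =>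
    ∑ d : dD, σ ((p.1, p.2.1.1, p.2.2, d), p.2.1.2) ((q.1, q.2.1.1, q.2.2, d), q.2.1.2))

/-- Hysteretic squashed entanglement `T_sq(A;C|B)_ρ` of a state on `A ⊗ B ⊗ C ⊗ D`:
half the infimum of `I(A;C|BE)_σ` over all state extensions `σ_ABCDE` of `ρ_ABCD`,
over all finite-dimensional extension systems `E`. -/
noncomputable def Tsq {dA dB dC dD : Type*}
    [Fintype dA] [Fintype dB] [Fintype dC] [Fintype dD]
    [DecidableEq dA] [DecidableEq dB] [DecidableEq dC] [DecidableEq dD]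
    (ρ : Matrix (dA × dB × dC × dD) (dA × dB × dC × dD) ℂ) : ℝ :=
  sInf { t : ℝ | ∃ (nE : ℕ)
    (σ : Matrix ((dA × dB × dC × dD) × Fin nE) ((dA × dB × dC × dD) × Fin nE) ℂ),
    IsDensity σ ∧ (Matrix.of fun p q => ∑ e, σ (p, e) (q, e)) = ρ ∧
    t = (1/2) * qcmiACgivenBE σ }

/-- For a state `σ` on `A ⊗ B ⊗ C ⊗ E`, the conditional mutual information
`I(A;C|BE)_σ` with conditioning system `BE`. -/
noncomputable def qcmi3 {dA dB dC dE : Type*}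
    [Fintype dA] [Fintype dB] [Fintype dC] [Fintype dE]
    [DecidableEq dA] [DecidableEq dB] [DecidableEq dC] [DecidableEq dE]
    (σ : Matrix ((dA × dB × dC) × dE) ((dA × dB × dC) × dE) ℂ) : ℝ :=
  qcmi (Matrix.of fun (p q : dA × (dB × dE) × dC) =>
    σ ((p.1, p.2.1.1, p.2.2), p.2.1.2) ((q.1, q.2.1.1, q.2.2), q.2.1.2))

/-- Squashed quantum non-Markovianity `N_sq(A;C|B)_ρ` of a state on `A ⊗ B ⊗ C`:
half the infimum of `I(A;C|BE)_σ` over all state extensions `σ_ABCE` of `ρ_ABC`. -/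
noncomputable def Nsq {dA dB dC : Type*}
    [Fintype dA] [Fintype dB] [Fintype dC]
    [DecidableEq dA] [DecidableEq dB] [DecidableEq dC]
    (ρ : Matrix (dA × dB × dC) (dA × dB × dC) ℂ) : ℝ :=
  sInf { t : ℝ | ∃ (nE : ℕ)
    (σ : Matrix ((dA × dB × dC) × Fin nE) ((dA × dB × dC) × Fin nE) ℂ),
    IsDensity σ ∧ (Matrix.of fun p q => ∑ e, σ (p, e) (q, e)) = ρ ∧
    t = (1/2) * qcmi3 σ }

/-- Choi matrix of a linear map on matrices. -/
noncomputable def choiMatrix {dX dY : Type*} [Fintype dX] [DecidableEq dX] [Fintype dY]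
    (Φ : Matrix dX dX ℂ →ₗ[ℂ] Matrix dY dY ℂ) : Matrix (dX × dY) (dX × dY) ℂ :=
  Matrix.of fun p q => Φ (Matrix.single p.1 q.1 1) p.2 q.2

/-- A quantum channel: completely positive (equivalently, PSD Choi matrix, by Choi's
theorem) and trace-preserving linear map. -/
def IsQuantumChannel {dX dY : Type*} [Fintype dX] [DecidableEq dX] [Fintype dY]
    (Φ : Matrix dX dX ℂ →ₗ[ℂ] Matrix dY dY ℂ) : Prop :=
  (choiMatrix Φ).PosSemidef ∧ ∀ ρ : Matrix dX dX ℂ, (Φ ρ).trace = ρ.trace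

/-- `(Φ ⊗ id)` applied to an operator on `X ⊗ R`. -/
noncomputable def applyLeft {dX dY dR : Type*} [Fintype dX] [DecidableEq dX]
    (Φ : Matrix dX dX ℂ →ₗ[ℂ] Matrix dY dY ℂ)
    (ρ : Matrix (dX × dR) (dX × dR) ℂ) : Matrix (dY × dR) (dY × dR) ℂ :=
  Matrix.of fun p q => ∑ a, ∑ a',
    Φ (Matrix.single a a' 1) p.1 q.1 * ρ (a, p.2) (a', q.2)

/-- `(id ⊗ Φ)` applied to an operator on `R ⊗ X`. -/
noncomputable def applyRight {dX dY dR : Type*} [Fintype dX] [DecidableEq dX]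
    (Φ : Matrix dX dX ℂ →ₗ[ℂ] Matrix dY dY ℂ)
    (ρ : Matrix (dR × dX) (dR × dX) ℂ) : Matrix (dR × dY) (dR × dY) ℂ :=
  Matrix.of fun p q => ∑ x, ∑ x',
    Φ (Matrix.single x x' 1) p.2 q.2 * ρ (p.1, x) (q.1, x')

/-- The positive semidefinite square root of a positive semidefinite matrix
(the Mathlib definition of December 2024, since removed from Mathlib). -/
noncomputable def Matrix.PosSemidef.sqrt {n 𝕜 : Type*} [Fintype n] [RCLike 𝕜] [DecidableEq n]
    {A : Matrix n n 𝕜} (hA : A.PosSemidef) : Matrix n n 𝕜 :=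
  hA.1.eigenvectorUnitary.1 * Matrix.diagonal ((↑) ∘ (Real.sqrt ∘ hA.1.eigenvalues)) *
  (star hA.1.eigenvectorUnitary : Matrix n n 𝕜)

/-- Trace norm `‖X‖₁ = tr √(XᴴX)`. -/
noncomputable def traceNorm {d : Type*} [Fintype d] [DecidableEq d]
    (X : Matrix d d ℂ) : ℝ :=
  ((Matrix.posSemidef_conjTranspose_mul_self X).sqrt.trace).re

/-- Fidelity `F(ρ,σ) = (tr|√ρ √σ|)²` (junk value `0` off the PSD cone). -/
noncomputable def fidelity {d : Type*} [Fintype d] [DecidableEq d]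
    (ρ σ : Matrix d d ℂ) : ℝ := by
  classical exact
    if h : ρ.PosSemidef ∧ σ.PosSemidef then (traceNorm (h.1.sqrt * h.2.sqrt)) ^ 2 else 0

/-- Binary entropy (base 2), with `h₂(0) = h₂(1) = 0`. -/
noncomputable def binEnt (p : ℝ) : ℝ :=
  -(p * Real.logb 2 p) - (1 - p) * Real.logb 2 (1 - p)

/-- ABC-marginal of the pure state `|v⟩⟨v|` on `A ⊗ B ⊗ C ⊗ D`. -/
noncomputable def pureMargABC {dA dB dC dD : Type*}
    [Fintype dA] [Fintype dB] [Fintype dC] [Fintype dD]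
    (v : (dA × dB × dC × dD) → ℂ) : Matrix (dA × dB × dC) (dA × dB × dC) ℂ :=
  Matrix.of fun p q =>
    ∑ d, v (p.1, p.2.1, p.2.2, d) * (starRingEnd ℂ) (v (q.1, q.2.1, q.2.2, d))

/-- Convex-roof extension of QCMI: `co(QCMI)[ρ_ABCD]` is half the infimum of
`Σ_i p_i I(A;C|B)_{ψ^i}` over finite pure-state ensembles `{p_i, ψ^i}` for `ρ`. -/
noncomputable def coQCMI {dA dB dC dD : Type*}
    [Fintype dA] [Fintype dB] [Fintype dC] [Fintype dD]
    [DecidableEq dA] [DecidableEq dB] [DecidableEq dC] [DecidableEq dD]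
    (ρ : Matrix (dA × dB × dC × dD) (dA × dB × dC × dD) ℂ) : ℝ :=
  sInf { t : ℝ | ∃ (k : ℕ) (p : Fin k → ℝ) (v : Fin k → (dA × dB × dC × dD) → ℂ),
    (∀ i, 0 ≤ p i) ∧ (∑ i, p i) = 1 ∧
    (∀ i, ∑ a, v i a * (starRingEnd ℂ) (v i a) = 1) ∧
    ρ = ∑ i, (p i : ℂ) • Matrix.of (fun a b => v i a * (starRingEnd ℂ) (v i b)) ∧
    t = (1/2) * ∑ i, p i * qcmi (pureMargABC (v i)) }

open Classical in
/-- The `n`-qubit W state vector `n^{-1/2} Σ_i |e_i⟩`, with the first three qubits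
labelled `A`, `B`, `C` and the remaining `n − 3` qubits labelled `D`; the amplitude
is `n^{-1/2}` exactly on computational basis states of Hamming weight one. -/
noncomputable def wVec (n : ℕ) :
    (Fin 2 × Fin 2 × Fin 2 × (Fin (n - 3) → Fin 2)) → ℂ := fun p =>
  if (if p.1 = 1 then 1 else 0) + (if p.2.1 = 1 then 1 else 0)
      + (if p.2.2.1 = 1 then 1 else 0)
      + (Finset.univ.filter fun i => p.2.2.2 i = 1).card = 1 then
    ((Real.sqrt n : ℝ) : ℂ)⁻¹
  else 0

/-! ### Auxiliary machinery for computing the W-state QCMI -/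

section WAux

open Polynomial Matrix

set_option maxHeartbeats 2000000

theorem charpoly_diag_conj' {ι : Type*} [Fintype ι] [DecidableEq ι] (U D : Matrix ι ι ℂ)
    (hU : U ∈ Matrix.unitaryGroup ι ℂ) :
    (U * D * star U).charpoly = D.charpoly := by
  have h1 : U * star U = 1 := (Matrix.mem_unitaryGroup_iff).mp hU
  have h2 : star U * U = 1 := (Matrix.mem_unitaryGroup_iff').mp hU
  have hm : ∀ A B : Matrix ι ι ℂ, (A * B).map (C : ℂ →+* ℂ[X]) = A.map C * B.map C := by
    intro A B; ext i j; simp [Matrix.map_apply, Matrix.mul_apply, map_sum]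
  have key : charmatrix (U * D * star U) = U.map C * charmatrix D * (star U).map C := by
    unfold charmatrix
    simp only [RingHom.mapMatrix_apply]
    rw [Matrix.mul_sub, Matrix.sub_mul, hm, hm]
    congr 1
    have hsc : (Matrix.scalar ι (X : ℂ[X])) = (X : ℂ[X]) • (1 : Matrix ι ι ℂ[X]) := by
      simp [Matrix.scalar, Matrix.smul_one_eq_diagonal]
    rw [hsc, Matrix.mul_smul, Matrix.mul_one, Matrix.smul_mul, ← hm, h1]
    simp
  rw [Matrix.charpoly, key, Matrix.det_mul, Matrix.det_mul, mul_comm, ← mul_assoc,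
    ← Matrix.det_mul, ← hm, h2]
  simp [Matrix.charpoly]

theorem charpoly_diagonal' {ι : Type*} [Fintype ι] [DecidableEq ι] (c : ι → ℂ) :
    (Matrix.diagonal c).charpoly = ∏ i, (X - C (c i)) := by
  have h : charmatrix (diagonal c) = diagonal (fun i => (X:ℂ[X]) - C (c i)) := by
    ext i j
    by_cases h : i = j
    · subst h; simp [charmatrix_apply_eq]
    · rw [charmatrix_apply_ne _ _ _ h, diagonal_apply_ne _ h, diagonal_apply_ne _ h]
      simp
  rw [Matrix.charpoly, h, det_diagonal]

theorem vnEntropy_of_unitary_diag {ι : Type*} [Fintype ι] [DecidableEq ι]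
    (ρ U : Matrix ι ι ℂ) (d : ι → ℝ) (hU : U ∈ Matrix.unitaryGroup ι ℂ)
    (h : ρ = U * Matrix.diagonal (fun i => ((d i : ℝ) : ℂ)) * star U) :
    vnEntropy ρ = -∑ i, d i * Real.logb 2 (d i) := by
  have hd : (Matrix.diagonal fun i => ((d i : ℝ) : ℂ)).IsHermitian := by
    rw [Matrix.isHermitian_diagonal_iff]
    intro i
    simp [_root_.IsSelfAdjoint, Complex.conj_ofReal]
  have hherm : ρ.IsHermitian := by
    rw [h, star_eq_conjTranspose]
    exact Matrix.isHermitian_mul_mul_conjTranspose U hd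
  have key : ∀ c : ι → ℝ, (∏ i, ((X : ℂ[X]) - C ((c i : ℂ)))).roots
      = (Finset.univ.val.map c).map (fun x : ℝ => (x : ℂ)) := by
    intro c
    rw [Finset.prod_eq_multiset_prod]
    have e : Finset.univ.val.map (fun i => (X : ℂ[X]) - C ((c i : ℂ)))
        = ((Finset.univ.val.map c).map (fun x : ℝ => (x : ℂ))).map (fun a => X - C a) := by
      rw [Multiset.map_map, Multiset.map_map]; rfl
    rw [e, Polynomial.roots_multiset_prod_X_sub_C]
  have hc1 : ρ.charpoly = ∏ i, ((X : ℂ[X]) - C ((d i : ℂ))) := by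
    rw [h, charpoly_diag_conj' _ _ hU, charpoly_diagonal']
  have hc2 : ρ.charpoly = ∏ i, ((X : ℂ[X]) - C ((hherm.eigenvalues i : ℂ))) := by
    conv_lhs => rw [hherm.spectral_theorem, Unitary.conjStarAlgAut_apply]
    rw [charpoly_diag_conj' _ _ (hherm.eigenvectorUnitary).prop, charpoly_diagonal']
    rfl
  have hroots := (key hherm.eigenvalues).symm.trans
    ((congrArg Polynomial.roots (hc2.symm.trans hc1)).trans (key d))
  have hmul : Finset.univ.val.map hherm.eigenvalues = Finset.univ.val.map d :=
    Multiset.map_injective Complex.ofReal_injective hroots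
  have hsum : ∀ c : ι → ℝ, ∑ i, c i * Real.logb 2 (c i)
      = ((Finset.univ.val.map c).map (fun x : ℝ => x * Real.logb 2 x)).sum := by
    intro c
    rw [Finset.sum_eq_multiset_sum, Multiset.map_map]; rfl
  rw [vnEntropy, dif_pos hherm, hsum, hmul, ← hsum]

/-- Hamming weight of a three-qubit computational basis label. -/
def wt3 (p : Fin 2 × Fin 2 × Fin 2) : ℕ :=
  (if p.1 = 1 then 1 else 0) + (if p.2.1 = 1 then 1 else 0) + (if p.2.2 = 1 then 1 else 0)

open Finset in
lemma card_wt_zero (m : ℕ) :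
    ((univ : Finset (Fin m → Fin 2)).filter
      fun f => (univ.filter fun i => f i = 1).card = 0).card = 1 := by
  classical
  rw [Finset.card_eq_one]
  refine ⟨fun _ => 0, ?_⟩
  ext f
  rw [mem_filter, mem_singleton]
  constructor
  · rintro ⟨-, h⟩
    have h0 : (univ.filter fun i => f i = 1) = ∅ := Finset.card_eq_zero.mp h
    funext i
    have hni : i ∉ (univ.filter fun i => f i = 1) := by rw [h0]; exact notMem_empty i
    rw [mem_filter] at hni
    have : ¬ f i = 1 := fun hh => hni ⟨mem_univ i, hh⟩
    omega
  · rintro rfl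
    refine ⟨mem_univ _, ?_⟩
    rw [Finset.card_eq_zero, Finset.filter_eq_empty_iff]
    intro i _
    simp

open Finset in
lemma card_wt_one (m : ℕ) :
    ((univ : Finset (Fin m → Fin 2)).filter
      fun f => (univ.filter fun i => f i = 1).card = 1).card = m := by
  classical
  have h : ((univ : Finset (Fin m → Fin 2)).filter
      fun f => (univ.filter fun i => f i = 1).card = 1)
      = univ.image (fun j (i : Fin m) => if i = j then (1 : Fin 2) else 0) := by
    ext f
    rw [mem_filter, mem_image]
    constructor
    · rintro ⟨-, h⟩
      rw [Finset.card_eq_one] at h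
      obtain ⟨j, hj⟩ := h
      refine ⟨j, mem_univ j, ?_⟩
      funext i
      by_cases hij : i = j
      · subst hij
        have hm : i ∈ univ.filter fun i' => f i' = 1 := by
          rw [hj]; exact Finset.mem_singleton_self _
        rw [mem_filter] at hm
        simp [hm.2]
      · have hni : i ∉ univ.filter fun i' => f i' = 1 := by
          rw [hj, mem_singleton]; exact hij
        rw [mem_filter] at hni
        have h1 : ¬ f i = 1 := fun hh => hni ⟨mem_univ i, hh⟩
        have h0 : f i = 0 := by omega
        simp [hij, h0]
    · rintro ⟨j, -, rfl⟩
      refine ⟨mem_univ _, ?_⟩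
      have he : (univ.filter fun i : Fin m => (if i = j then (1:Fin 2) else 0) = 1) = {j} := by
        ext i; by_cases hij : i = j <;> simp [hij]
      rw [he, Finset.card_singleton]
  rw [h, Finset.card_image_of_injective _ ?_, Finset.card_univ, Fintype.card_fin]
  intro j j' hjj
  by_contra hne
  have h1 : (if (j : Fin m) = j then (1:Fin 2) else 0) = if j = j' then 1 else 0 :=
    congrFun hjj j
  rw [if_pos rfl, if_neg hne] at h1
  exact one_ne_zero h1

lemma entry_eq (n : ℕ) (hn : 4 ≤ n) (p q : Fin 2 × Fin 2 × Fin 2) :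
    (∑ f : Fin (n - 3) → Fin 2,
      wVec n (p.1, p.2.1, p.2.2, f) * (starRingEnd ℂ) (wVec n (q.1, q.2.1, q.2.2, f)))
    = if wt3 p = 0 ∧ wt3 q = 0 then ((n : ℂ) - 3) / n
      else if wt3 p = 1 ∧ wt3 q = 1 then (n : ℂ)⁻¹ else 0 := by
  classical
  have hn0 : (0:ℝ) ≤ (n:ℝ) := by positivity
  have hnne : ((n:ℝ):ℂ) ≠ 0 := by
    simp only [ne_eq, Complex.ofReal_eq_zero, Nat.cast_eq_zero]
    omega
  have hs : ((Real.sqrt n : ℝ) : ℂ)⁻¹ * ((Real.sqrt n : ℝ) : ℂ)⁻¹ = ((n:ℝ):ℂ)⁻¹ := by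
    rw [← mul_inv, ← Complex.ofReal_mul, Real.mul_self_sqrt hn0]
  have key : ∀ f : Fin (n-3) → Fin 2,
      wVec n (p.1, p.2.1, p.2.2, f) * (starRingEnd ℂ) (wVec n (q.1, q.2.1, q.2.2, f))
      = if (wt3 p + (Finset.univ.filter fun i => f i = 1).card = 1
            ∧ wt3 q + (Finset.univ.filter fun i => f i = 1).card = 1)
        then ((n:ℝ):ℂ)⁻¹ else 0 := by
    intro f
    simp only [wVec, wt3, apply_ite (starRingEnd ℂ), map_zero, map_inv₀, Complex.conj_ofReal,
      ite_mul, zero_mul, mul_ite, mul_zero]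
    split_ifs with h1 h2 h3 h4 h5 h6 h7 <;> first | exact hs | rfl | (exfalso; omega)
  rw [Finset.sum_congr rfl (fun f _ => key f), Finset.sum_ite, Finset.sum_const,
    Finset.sum_const_zero, add_zero]
  by_cases h00 : wt3 p = 0 ∧ wt3 q = 0
  · rw [if_pos h00]
    have hfe : (Finset.univ.filter fun f : Fin (n-3) → Fin 2 =>
        (wt3 p + (Finset.univ.filter fun i => f i = 1).card = 1
          ∧ wt3 q + (Finset.univ.filter fun i => f i = 1).card = 1))
        = Finset.univ.filter fun f => (Finset.univ.filter fun i => f i = 1).card = 1 := by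
      apply Finset.filter_congr; intro f _
      constructor
      · intro h; omega
      · intro h; omega
    rw [hfe, card_wt_one, nsmul_eq_mul]
    have h3 : ((n - 3 : ℕ) : ℂ) = (n : ℂ) - 3 := by
      push_cast [Nat.cast_sub (by omega : 3 ≤ n)]; ring
    rw [h3]
    push_cast
    field_simp
  · rw [if_neg h00]
    by_cases h11 : wt3 p = 1 ∧ wt3 q = 1
    · rw [if_pos h11]
      have hfe : (Finset.univ.filter fun f : Fin (n-3) → Fin 2 =>
          (wt3 p + (Finset.univ.filter fun i => f i = 1).card = 1
            ∧ wt3 q + (Finset.univ.filter fun i => f i = 1).card = 1))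
          = Finset.univ.filter fun f => (Finset.univ.filter fun i => f i = 1).card = 0 := by
        apply Finset.filter_congr; intro f _
        constructor
        · intro h; omega
        · intro h; omega
      rw [hfe, card_wt_zero, one_smul]
      push_cast
      rfl
    · rw [if_neg h11]
      have hfe : (Finset.univ.filter fun f : Fin (n-3) → Fin 2 =>
          (wt3 p + (Finset.univ.filter fun i => f i = 1).card = 1
            ∧ wt3 q + (Finset.univ.filter fun i => f i = 1).card = 1)) = ∅ := by
        rw [Finset.filter_eq_empty_iff]
        intro f _
        omega
      rw [hfe, Finset.card_empty, zero_smul]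

/-- The ABC-marginal of the W state, written explicitly. -/
noncomputable def Ew (n : ℕ) : Matrix (Fin 2 × Fin 2 × Fin 2) (Fin 2 × Fin 2 × Fin 2) ℂ :=
  Matrix.of fun p q =>
    if wt3 p = 0 ∧ wt3 q = 0 then ((n : ℂ) - 3) / n
    else if wt3 p = 1 ∧ wt3 q = 1 then (n : ℂ)⁻¹ else 0

lemma sqrt2C : ((Real.sqrt 2 : ℝ) : ℂ)⁻¹ * ((Real.sqrt 2 : ℝ) : ℂ)⁻¹ = 2⁻¹ := by
  rw [← mul_inv, ← Complex.ofReal_mul, Real.mul_self_sqrt (by norm_num : (0:ℝ) ≤ 2)]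
  norm_num

lemma sqrt3C : ((Real.sqrt 3 : ℝ) : ℂ)⁻¹ * ((Real.sqrt 3 : ℝ) : ℂ)⁻¹ = 3⁻¹ := by
  rw [← mul_inv, ← Complex.ofReal_mul, Real.mul_self_sqrt (by norm_num : (0:ℝ) ≤ 3)]
  norm_num

lemma sqrt6C : ((Real.sqrt 6 : ℝ) : ℂ)⁻¹ * ((Real.sqrt 6 : ℝ) : ℂ)⁻¹ = 6⁻¹ := by
  rw [← mul_inv, ← Complex.ofReal_mul, Real.mul_self_sqrt (by norm_num : (0:ℝ) ≤ 6)]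
  norm_num

/-- Eigenvector unitary for the AB (and BC) marginal. -/
noncomputable def U4 : Matrix (Fin 2 × Fin 2) (Fin 2 × Fin 2) ℂ :=
  Matrix.of fun p k =>
    if k = (0,0) then (if p = (0,0) then 1 else 0)
    else if k = (0,1) then
      (if p = (0,1) ∨ p = (1,0) then ((Real.sqrt 2 : ℝ) : ℂ)⁻¹ else 0)
    else if k = (1,0) then
      (if p = (0,1) then ((Real.sqrt 2 : ℝ) : ℂ)⁻¹
       else if p = (1,0) then -((Real.sqrt 2 : ℝ) : ℂ)⁻¹ else 0)
    else (if p = (1,1) then 1 else 0)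

noncomputable def d4 (n : ℕ) : Fin 2 × Fin 2 → ℝ := fun k =>
  if k = (0,0) then ((n:ℝ) - 2) / n else if k = (0,1) then 2 / n else 0

lemma hU4 : U4 ∈ Matrix.unitaryGroup (Fin 2 × Fin 2) ℂ := by
  rw [Matrix.mem_unitaryGroup_iff]
  ext p q
  fin_cases p <;> fin_cases q <;>
    (simp (config := { decide := true }) [U4, Matrix.mul_apply, Fintype.sum_prod_type,
        Fin.sum_univ_two, Matrix.one_apply, Matrix.star_apply, map_inv₀, map_neg,
        Complex.conj_ofReal, map_ofNat]) <;>
    (first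
       | rfl
       | ring1
       | linear_combination (2:ℂ) * sqrt2C
       | linear_combination sqrt2C
       | linear_combination -sqrt2C
       | norm_num)

/-- Eigenvector unitary for the full ABC marginal. -/
noncomputable def U8 : Matrix (Fin 2 × Fin 2 × Fin 2) (Fin 2 × Fin 2 × Fin 2) ℂ :=
  Matrix.of fun p k =>
    if k = (0,0,0) then (if p = (0,0,0) then 1 else 0)
    else if k = (0,0,1) then
      (if p = (1,0,0) ∨ p = (0,1,0) ∨ p = (0,0,1) then ((Real.sqrt 3 : ℝ) : ℂ)⁻¹ else 0)
    else if k = (0,1,0) then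
      (if p = (1,0,0) then ((Real.sqrt 2 : ℝ) : ℂ)⁻¹
       else if p = (0,1,0) then -((Real.sqrt 2 : ℝ) : ℂ)⁻¹ else 0)
    else if k = (0,1,1) then
      (if p = (1,0,0) ∨ p = (0,1,0) then ((Real.sqrt 6 : ℝ) : ℂ)⁻¹
       else if p = (0,0,1) then -2 * ((Real.sqrt 6 : ℝ) : ℂ)⁻¹ else 0)
    else if k = (1,0,0) then (if p = (1,1,0) then 1 else 0)
    else if k = (1,0,1) then (if p = (1,0,1) then 1 else 0)
    else if k = (1,1,0) then (if p = (0,1,1) then 1 else 0)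
    else (if p = (1,1,1) then 1 else 0)

noncomputable def d8 (n : ℕ) : Fin 2 × Fin 2 × Fin 2 → ℝ := fun k =>
  if k = (0,0,0) then ((n:ℝ) - 3) / n else if k = (0,0,1) then 3 / n else 0

lemma hU8 : U8 ∈ Matrix.unitaryGroup (Fin 2 × Fin 2 × Fin 2) ℂ := by
  rw [Matrix.mem_unitaryGroup_iff]
  ext p q
  fin_cases p <;> fin_cases q <;>
    (simp (config := { decide := true }) [U8, Matrix.mul_apply, Fintype.sum_prod_type,
        Fin.sum_univ_two, Matrix.one_apply, Matrix.star_apply, map_inv₀, map_neg,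
        Complex.conj_ofReal, map_ofNat]) <;>
    (first
       | rfl
       | ring1
       | linear_combination sqrt3C + sqrt2C + sqrt6C
       | linear_combination sqrt3C - sqrt2C + sqrt6C
       | linear_combination sqrt3C - 2 * sqrt6C
       | linear_combination sqrt3C + 4 * sqrt6C
       | linear_combination sqrt3C
       | norm_num)



lemma W_fact_B (n : ℕ) (hn : 4 ≤ n) :
    (Matrix.of fun (b b' : Fin 2) => ∑ a, ∑ c, Ew n (a, b, c) (a, b', c))
      = (1 : Matrix (Fin 2) (Fin 2) ℂ)
        * Matrix.diagonal (fun b => (((if b = 0 then ((n:ℝ)-1)/n else 1/n) : ℝ) : ℂ))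
        * star (1 : Matrix (Fin 2) (Fin 2) ℂ) := by
  have hnC : ((n : ℂ)) ≠ 0 := by
    simp only [ne_eq, Nat.cast_eq_zero]; omega
  rw [star_one, Matrix.one_mul, Matrix.mul_one]
  ext b b'
  fin_cases b <;> fin_cases b' <;>
    (simp (config := { decide := true }) [Ew, wt3, Matrix.diagonal, Fin.sum_univ_two]) <;>
    (first
      | ring1
      | (push_cast; field_simp; ring1)
      | (push_cast; field_simp; done)
      | (norm_num; done))

lemma W_SB (n : ℕ) (hn : 4 ≤ n) :
    vnEntropy (Matrix.of fun (b b' : Fin 2) => ∑ a, ∑ c, Ew n (a, b, c) (a, b', c))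
      = binEnt (1 / (n:ℝ)) := by
  have hn0 : (n:ℝ) ≠ 0 := by positivity
  rw [vnEntropy_of_unitary_diag _ 1 _ (one_mem _) (W_fact_B n hn), Fin.sum_univ_two,
    if_pos rfl, if_neg (by decide : ¬(1:Fin 2) = 0)]
  rw [binEnt, show (1:ℝ) - 1/(n:ℝ) = ((n:ℝ)-1)/n by field_simp]
  ring

lemma W_fact_AB (n : ℕ) (hn : 4 ≤ n) :
    (Matrix.of fun (p q : Fin 2 × Fin 2) => ∑ c, Ew n (p.1, p.2, c) (q.1, q.2, c))
      = U4 * Matrix.diagonal (fun k => ((d4 n k : ℝ) : ℂ)) * star U4 := by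
  have hnC : ((n : ℂ)) ≠ 0 := by
    simp only [ne_eq, Nat.cast_eq_zero]; omega
  ext p q
  fin_cases p <;> fin_cases q <;>
    (simp (config := { decide := true }) [Ew, wt3, U4, d4, Matrix.mul_apply,
      Matrix.mul_diagonal, Fintype.sum_prod_type, Fin.sum_univ_two, Matrix.star_apply,
      map_inv₀, map_neg, Complex.conj_ofReal, map_ofNat]) <;>
    (first
      | ring1
      | (push_cast; linear_combination (-(2:ℂ)/n) * sqrt2C)
      | (push_cast; linear_combination ((2:ℂ)/n) * sqrt2C)
      | (push_cast; field_simp; ring1)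
      | (push_cast; field_simp; done)
      | (norm_num; done))

lemma W_fact_BC (n : ℕ) (hn : 4 ≤ n) :
    (Matrix.of fun (p q : Fin 2 × Fin 2) => ∑ a, Ew n (a, p.1, p.2) (a, q.1, q.2))
      = U4 * Matrix.diagonal (fun k => ((d4 n k : ℝ) : ℂ)) * star U4 := by
  have hnC : ((n : ℂ)) ≠ 0 := by
    simp only [ne_eq, Nat.cast_eq_zero]; omega
  ext p q
  fin_cases p <;> fin_cases q <;>
    (simp (config := { decide := true }) [Ew, wt3, U4, d4, Matrix.mul_apply,
      Matrix.mul_diagonal, Fintype.sum_prod_type, Fin.sum_univ_two, Matrix.star_apply,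
      map_inv₀, map_neg, Complex.conj_ofReal, map_ofNat]) <;>
    (first
      | ring1
      | (push_cast; linear_combination (-(2:ℂ)/n) * sqrt2C)
      | (push_cast; linear_combination ((2:ℂ)/n) * sqrt2C)
      | (push_cast; field_simp; ring1)
      | (push_cast; field_simp; done)
      | (norm_num; done))

lemma W_SAB (n : ℕ) (hn : 4 ≤ n) :
    vnEntropy (Matrix.of fun (p q : Fin 2 × Fin 2) => ∑ c, Ew n (p.1, p.2, c) (q.1, q.2, c))
      = binEnt (2 / (n:ℝ)) := by
  have hn0 : (n:ℝ) ≠ 0 := by positivity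
  rw [vnEntropy_of_unitary_diag _ U4 _ hU4 (W_fact_AB n hn)]
  have hsum : ∑ k : Fin 2 × Fin 2, d4 n k * Real.logb 2 (d4 n k)
      = ((n:ℝ)-2)/n * Real.logb 2 (((n:ℝ)-2)/n) + 2/n * Real.logb 2 (2/(n:ℝ)) := by
    rw [Fintype.sum_prod_type]
    simp (config := { decide := true }) [d4, Fin.sum_univ_two]
  rw [hsum, binEnt, show (1:ℝ) - 2/(n:ℝ) = ((n:ℝ)-2)/n by field_simp]
  ring

lemma W_SBC (n : ℕ) (hn : 4 ≤ n) :
    vnEntropy (Matrix.of fun (p q : Fin 2 × Fin 2) => ∑ a, Ew n (a, p.1, p.2) (a, q.1, q.2))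
      = binEnt (2 / (n:ℝ)) := by
  have hn0 : (n:ℝ) ≠ 0 := by positivity
  rw [vnEntropy_of_unitary_diag _ U4 _ hU4 (W_fact_BC n hn)]
  have hsum : ∑ k : Fin 2 × Fin 2, d4 n k * Real.logb 2 (d4 n k)
      = ((n:ℝ)-2)/n * Real.logb 2 (((n:ℝ)-2)/n) + 2/n * Real.logb 2 (2/(n:ℝ)) := by
    rw [Fintype.sum_prod_type]
    simp (config := { decide := true }) [d4, Fin.sum_univ_two]
  rw [hsum, binEnt, show (1:ℝ) - 2/(n:ℝ) = ((n:ℝ)-2)/n by field_simp]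
  ring

lemma W_fact_ABC (n : ℕ) (hn : 4 ≤ n) :
    Ew n = U8 * Matrix.diagonal (fun k => ((d8 n k : ℝ) : ℂ)) * star U8 := by
  have hnC : ((n : ℂ)) ≠ 0 := by
    simp only [ne_eq, Nat.cast_eq_zero]; omega
  ext p q
  fin_cases p <;> fin_cases q <;>
    (simp (config := { decide := true }) [Ew, wt3, U8, d8, Matrix.mul_apply,
      Matrix.mul_diagonal, Fintype.sum_prod_type, Fin.sum_univ_two, Matrix.star_apply,
      map_inv₀, map_neg, Complex.conj_ofReal, map_ofNat]) <;>
    (first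
      | ring1
      | (push_cast; linear_combination (-(3:ℂ)/n) * sqrt3C)
      | (push_cast; linear_combination ((3:ℂ)/n) * sqrt3C)
      | (push_cast; field_simp; ring1)
      | (push_cast; field_simp; done)
      | (norm_num; done))

lemma W_SABC (n : ℕ) (hn : 4 ≤ n) :
    vnEntropy (Ew n) = binEnt (3 / (n:ℝ)) := by
  have hn0 : (n:ℝ) ≠ 0 := by positivity
  rw [vnEntropy_of_unitary_diag _ U8 _ hU8 (W_fact_ABC n hn)]
  have hsum : ∑ k : Fin 2 × Fin 2 × Fin 2, d8 n k * Real.logb 2 (d8 n k)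
      = ((n:ℝ)-3)/n * Real.logb 2 (((n:ℝ)-3)/n) + 3/n * Real.logb 2 (3/(n:ℝ)) := by
    rw [Fintype.sum_prod_type]
    simp (config := { decide := true }) [d8, Fintype.sum_prod_type, Fin.sum_univ_two]
  rw [hsum, binEnt, show (1:ℝ) - 3/(n:ℝ) = ((n:ℝ)-3)/n by field_simp]
  ring

lemma W_pos (n : ℕ) (hn : 4 ≤ n) :
    0 < 2 * binEnt (2 / (n:ℝ)) - binEnt (1 / (n:ℝ)) - binEnt (3 / (n:ℝ)) := by
  have hn4 : (4:ℝ) ≤ (n:ℝ) := by exact_mod_cast hn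
  have hn0 : (0:ℝ) < (n:ℝ) := by linarith
  have hbe : ∀ p : ℝ, binEnt p = Real.binEntropy p / Real.log 2 := by
    intro p
    simp only [binEnt, Real.binEntropy, Real.log_inv, Real.logb]
    ring
  have h1 : (1:ℝ)/(n:ℝ) ∈ Set.Icc (0:ℝ) 1 := by
    constructor
    · positivity
    · rw [div_le_one hn0]; linarith
  have h3 : (3:ℝ)/(n:ℝ) ∈ Set.Icc (0:ℝ) 1 := by
    constructor
    · positivity
    · rw [div_le_one hn0]; linarith
  have hne : (1:ℝ)/(n:ℝ) ≠ 3/(n:ℝ) := by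
    intro h
    rw [div_eq_div_iff hn0.ne' hn0.ne'] at h
    linarith
  have key := Real.strictConcave_binEntropy.2 h1 h3 hne (by norm_num : (0:ℝ) < 1/2)
    (by norm_num : (0:ℝ) < 1/2) (by norm_num)
  rw [smul_eq_mul, smul_eq_mul, smul_eq_mul, smul_eq_mul] at key
  rw [show (1:ℝ)/2 * (1/(n:ℝ)) + 1/2 * (3/(n:ℝ)) = 2/(n:ℝ) by ring] at key
  have hL : (0:ℝ) < Real.log 2 := Real.log_pos (by norm_num)
  rw [hbe, hbe, hbe,
    show 2 * (Real.binEntropy (2/(n:ℝ)) / Real.log 2) - Real.binEntropy (1/(n:ℝ)) / Real.log 2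
      - Real.binEntropy (3/(n:ℝ)) / Real.log 2
      = (2 * Real.binEntropy (2/(n:ℝ)) - Real.binEntropy (1/(n:ℝ))
          - Real.binEntropy (3/(n:ℝ))) / Real.log 2 by ring]
  apply div_pos _ hL
  linarith

end WAux

/-- **QCMI of multi-qubit W states:** for `n ≥ 4`, with `A`, `B`, `C` the first
three qubits and `D` the remaining `n − 3` qubits,
`I(A;C|B)_{Ψ_n} = 2 h₂(2/n) − h₂(1/n) − h₂(3/n) > 0`. -/
theorem w_state_qcmi (n : ℕ) (hn : 4 ≤ n) :
    qcmi (Matrix.of fun (p q : Fin 2 × Fin 2 × Fin 2) =>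
        ∑ f : Fin (n - 3) → Fin 2,
          wVec n (p.1, p.2.1, p.2.2, f) * (starRingEnd ℂ) (wVec n (q.1, q.2.1, q.2.2, f)))
      = 2 * binEnt (2 / n) - binEnt (1 / n) - binEnt (3 / n)
    ∧ 0 < qcmi (Matrix.of fun (p q : Fin 2 × Fin 2 × Fin 2) =>
        ∑ f : Fin (n - 3) → Fin 2,
          wVec n (p.1, p.2.1, p.2.2, f) * (starRingEnd ℂ) (wVec n (q.1, q.2.1, q.2.2, f))) := by
  have hrho : (Matrix.of fun (p q : Fin 2 × Fin 2 × Fin 2) =>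
      ∑ f : Fin (n - 3) → Fin 2,
        wVec n (p.1, p.2.1, p.2.2, f) * (starRingEnd ℂ) (wVec n (q.1, q.2.1, q.2.2, f)))
      = Ew n := by
    ext p q
    exact entry_eq n hn p q
  rw [hrho]
  have hq : qcmi (Ew n) = 2 * binEnt (2 / (n:ℝ)) - binEnt (1 / (n:ℝ)) - binEnt (3 / (n:ℝ)) := by
    rw [qcmi, W_SAB n hn, W_SBC n hn, W_SB n hn, W_SABC n hn]
    ring
  rw [hq]
  exact ⟨rfl, W_pos n hn⟩
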